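/- Let G be a graph containing a vertex of degree ≥ d. Then for 1 ≤ p ≤ d, N_{ε,p}(G) ≥ √(p/8), where N_{ε,p}(G) = sup_{‖s‖₂,‖t‖₂≤1} ‖Σ_{i∼j} ε_{ij} s_i t_j‖_p. -/

import Mathlib

open MeasureTheory ProbabilityTheory
open scoped Classical

/-- The `L_p` Rademacher norm `N_{ε,p}(G)` of a graph `G`, with respect to a family `ε`
of random signs indexed by ordered pairs of vertices. -/
noncomputable def graphRadNorm {V : Type*} [Fintype V] {Ω : Type*} [MeasureSpace Ω]
    (G : SimpleGraph V) (ε : V × V → Ω → ℝ) (p : ℝ) : ℝ :=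
  sSup {x | ∃ s t : V → ℝ, ∑ v, s v ^ 2 ≤ 1 ∧ ∑ v, t v ^ 2 ≤ 1 ∧
    x = (∫ ω, |∑ i, ∑ j, if G.Adj i j then ε (i, j) ω * s i * t j else 0| ^ p) ^ (1 / p)}

theorem stmt14
    {V : Type*} [Fintype V] {Ω : Type*} [MeasureSpace Ω]
    [IsProbabilityMeasure (ℙ : Measure Ω)]
    (G : SimpleGraph V) (d : ℕ) (v : V) (hv : d ≤ G.degree v)
    (ε : V × V → Ω → ℝ)
    (hmeas : ∀ q, Measurable (ε q))
    (hindep : iIndepFun ε ℙ)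
    (hval : ∀ q ω, ε q ω = 1 ∨ ε q ω = -1)
    (hsym : ∀ q, ℙ {ω | ε q ω = 1} = 1 / 2)
    (p : ℝ) (hp1 : 1 ≤ p) (hpd : p ≤ d) :
    Real.sqrt (p / 8) ≤ graphRadNorm G ε p := by
  classical
  have hp0 : (0:ℝ) < p := lt_of_lt_of_le one_pos hp1
  set k := ⌊p⌋₊ with hkdef
  have hk1 : 1 ≤ k := Nat.floor_pos.mpr hp1
  have hkp : (k:ℝ) ≤ p := Nat.floor_le hp0.le
  have hk0 : (0:ℝ) < k := by exact_mod_cast hk1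
  have hpk : p ≤ 2 * k := by
    have h1 : p < k + 1 := Nat.lt_floor_add_one p
    have h2 : (1:ℝ) ≤ k := by exact_mod_cast hk1
    linarith
  have hkd : k ≤ d := by
    have : (k:ℝ) ≤ d := le_trans hkp hpd
    exact_mod_cast this
  obtain ⟨J, hJsub, hJcard⟩ := Finset.exists_subset_card_eq (s := G.neighborFinset v) (n := k)
    (by rw [SimpleGraph.card_neighborFinset_eq_degree]; exact le_trans hkd hv)
  set c : ℝ := Real.sqrt k with hcdef
  have hc0 : 0 < c := Real.sqrt_pos.mpr hk0
  have hcc : c * c = (k:ℝ) := Real.mul_self_sqrt hk0.le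
  set s : V → ℝ := fun i => if i = v then 1 else 0 with hsdef
  set t : V → ℝ := fun j => if j ∈ J then c⁻¹ else 0 with htdef
  have hs2 : ∑ i, s i ^ 2 = 1 := by
    simp [hsdef, apply_ite (· ^ (2:ℕ))]
  have ht2 : ∑ j, t j ^ 2 = 1 := by
    have h1 : ∀ j, t j ^ 2 = if j ∈ J then c⁻¹ ^ 2 else 0 := fun j => by
      simp [htdef, apply_ite (· ^ (2:ℕ))]
    rw [Finset.sum_congr rfl fun j _ => h1 j]
    rw [Finset.sum_ite_mem, Finset.univ_inter, Finset.sum_const, hJcard, nsmul_eq_mul]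
    have hc2 : c ^ 2 = (k:ℝ) := by rw [sq]; exact hcc
    rw [inv_pow, hc2]
    exact mul_inv_cancel₀ hk0.ne'
  set X : Ω → ℝ := fun ω => (∑ j ∈ J, ε (v, j) ω) * c⁻¹ with hXdef
  have hE : ∀ ω, (∑ i, ∑ j, if G.Adj i j then ε (i, j) ω * s i * t j else 0) = X ω := by
    intro ω
    rw [Finset.sum_eq_single v]
    · have h1 : ∀ j, (if G.Adj v j then ε (v, j) ω * s v * t j else 0)
          = if j ∈ J then ε (v, j) ω * c⁻¹ else 0 := by
        intro j
        by_cases hj : j ∈ J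
        · have hadj : G.Adj v j := (SimpleGraph.mem_neighborFinset G v j).mp (hJsub hj)
          simp [hsdef, htdef, hj, hadj]
        · by_cases hadj : G.Adj v j
          · simp [htdef, hj, hadj]
          · simp [hadj, hj]
      rw [Finset.sum_congr rfl fun j _ => h1 j, Finset.sum_ite_mem, Finset.univ_inter]
      show ∑ j ∈ J, ε (v, j) ω * c⁻¹ = (∑ j ∈ J, ε (v, j) ω) * c⁻¹
      exact (Finset.sum_mul _ _ _).symm
    · intro i _ hi
      apply Finset.sum_eq_zero
      intro j _
      simp [hsdef, hi]
    · intro h; exact absurd (Finset.mem_univ v) h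
  set f : Ω → ℝ := fun ω => |X ω| ^ p with hfdef
  have hXmeas : Measurable X := (Finset.measurable_sum J fun j _ => hmeas (v, j)).mul_const _
  have hfmeas : Measurable f :=
    (Real.continuous_rpow_const hp0.le).measurable.comp hXmeas.abs
  have hXbound : ∀ ω, |X ω| ≤ c := by
    intro ω
    have h1 : |∑ j ∈ J, ε (v, j) ω| ≤ (k:ℝ) := by
      calc |∑ j ∈ J, ε (v, j) ω| ≤ ∑ j ∈ J, |ε (v, j) ω| := Finset.abs_sum_le_sum_abs _ _
        _ = ∑ _j ∈ J, (1:ℝ) := Finset.sum_congr rfl fun j _ => by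
              rcases hval (v, j) ω with h | h <;> simp [h]
        _ = (k:ℝ) := by rw [Finset.sum_const, hJcard, nsmul_eq_mul, mul_one]
    calc |X ω| = |∑ j ∈ J, ε (v, j) ω| * c⁻¹ := by
          rw [hXdef, abs_mul, abs_of_nonneg (inv_nonneg.mpr hc0.le)]
      _ ≤ (k:ℝ) * c⁻¹ := by
          exact mul_le_mul_of_nonneg_right h1 (inv_nonneg.mpr hc0.le)
      _ = c := by rw [← hcc, mul_inv_cancel_right₀ hc0.ne']
  have hf_nonneg : ∀ ω, 0 ≤ f ω := fun ω => Real.rpow_nonneg (abs_nonneg _) p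
  have hfint : Integrable f ℙ := by
    refine (integrable_const (c ^ p)).mono' hfmeas.aestronglyMeasurable ?_
    refine Filter.Eventually.of_forall fun ω => ?_
    rw [Real.norm_eq_abs, abs_of_nonneg (hf_nonneg ω)]
    exact Real.rpow_le_rpow (abs_nonneg _) (hXbound ω) hp0.le
  -- the event
  set S : Finset (V × V) := J.image (fun j => (v, j)) with hSdef
  set T : V × V → Set Ω := fun q => ε q ⁻¹' {1} with hTdef
  have hTmeas : ∀ q, MeasurableSet (T q) := fun q => hmeas q (measurableSet_singleton 1)
  set A : Set Ω := ⋂ q ∈ S, T q with hAdef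
  have hAmeas : MeasurableSet A := S.measurableSet_biInter fun q _ => hTmeas q
  have hScard : S.card = k := by
    rw [hSdef, Finset.card_image_of_injective _ (fun a b h => (Prod.ext_iff.mp h).2), hJcard]
  have hPA : ℙ A = (1/2 : ENNReal) ^ k := by
    rw [hAdef, hTdef, hindep.meas_biInter (fun q _ => ⟨{1}, measurableSet_singleton 1, rfl⟩)]
    calc ∏ q ∈ S, ℙ (ε q ⁻¹' {1}) = ∏ _q ∈ S, (1/2 : ENNReal) :=
          Finset.prod_congr rfl fun q _ => hsym q
      _ = (1/2 : ENNReal) ^ k := by rw [Finset.prod_const, hScard]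
  have hPAr : (ℙ A).toReal = (2:ℝ)⁻¹ ^ k := by
    rw [hPA]; simp [ENNReal.toReal_pow]
  have hfA : ∀ ω ∈ A, f ω = c ^ p := by
    intro ω hω
    have hω' : ∀ j ∈ J, ε (v, j) ω = 1 := by
      intro j hj
      have hq : (v, j) ∈ S := Finset.mem_image_of_mem _ hj
      have := Set.mem_iInter₂.mp hω (v, j) hq
      exact this
    have hX : X ω = c := by
      show (∑ j ∈ J, ε (v, j) ω) * c⁻¹ = c
      rw [Finset.sum_congr rfl hω', Finset.sum_const, hJcard, nsmul_eq_mul, mul_one,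
        ← hcc, mul_inv_cancel_right₀ hc0.ne']
    rw [hfdef]; simp only [hX, abs_of_nonneg hc0.le]
  have hint_lb : c ^ p * (2:ℝ)⁻¹ ^ k ≤ ∫ ω, f ω := by
    have h1 : ∫ ω in A, f ω ∂ℙ = (ℙ A).toReal * c ^ p := by
      rw [setIntegral_congr_fun hAmeas hfA, setIntegral_const, smul_eq_mul, measureReal_def]
    have h2 : ∫ ω in A, f ω ∂ℙ ≤ ∫ ω, f ω :=
      setIntegral_le_integral hfint (Filter.Eventually.of_forall hf_nonneg)
    rw [h1, hPAr] at h2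
    linarith [h2]
  -- membership
  have hmem : (∫ ω, f ω) ^ (1/p) ∈ {x | ∃ s t : V → ℝ, ∑ v, s v ^ 2 ≤ 1 ∧ ∑ v, t v ^ 2 ≤ 1 ∧
      x = (∫ ω, |∑ i, ∑ j, if G.Adj i j then ε (i, j) ω * s i * t j else 0| ^ p) ^ (1 / p)} := by
    refine ⟨s, t, le_of_eq hs2, le_of_eq ht2, ?_⟩
    congr 1
    refine integral_congr_ae (Filter.Eventually.of_forall fun ω => ?_)
    show |X ω| ^ p = |∑ i, ∑ j, if G.Adj i j then ε (i, j) ω * s i * t j else 0| ^ p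
    rw [hE ω]
  -- bounded above
  have hbdd : BddAbove {x | ∃ s t : V → ℝ, ∑ v, s v ^ 2 ≤ 1 ∧ ∑ v, t v ^ 2 ≤ 1 ∧
      x = (∫ ω, |∑ i, ∑ j, if G.Adj i j then ε (i, j) ω * s i * t j else 0| ^ p) ^ (1 / p)} := by
    refine ⟨((Fintype.card V : ℝ)) ^ 2, ?_⟩
    rintro x ⟨s', t', hs', ht', rfl⟩
    set M : ℝ := ((Fintype.card V : ℝ)) ^ 2 with hMdef
    have hM0 : (0:ℝ) ≤ M := sq_nonneg _
    have habs1 : ∀ (u : V → ℝ), ∑ i, u i ^ 2 ≤ 1 → ∀ i, |u i| ≤ 1 := by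
      intro u hu i
      have h1 : u i ^ 2 ≤ 1 :=
        le_trans (Finset.single_le_sum (fun j _ => sq_nonneg (u j)) (Finset.mem_univ i)) hu
      calc |u i| = Real.sqrt (u i ^ 2) := (Real.sqrt_sq_eq_abs _).symm
        _ ≤ Real.sqrt 1 := Real.sqrt_le_sqrt h1
        _ = 1 := Real.sqrt_one
    have hsum : ∀ ω, |∑ i, ∑ j, if G.Adj i j then ε (i, j) ω * s' i * t' j else 0| ≤ M := by
      intro ω
      calc |∑ i, ∑ j, if G.Adj i j then ε (i, j) ω * s' i * t' j else 0|
          ≤ ∑ i, |∑ j, if G.Adj i j then ε (i, j) ω * s' i * t' j else 0| :=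
            Finset.abs_sum_le_sum_abs _ _
        _ ≤ ∑ i, ∑ j, |if G.Adj i j then ε (i, j) ω * s' i * t' j else 0| :=
            Finset.sum_le_sum fun i _ => Finset.abs_sum_le_sum_abs _ _
        _ ≤ ∑ _i : V, ∑ _j : V, (1:ℝ) := by
            refine Finset.sum_le_sum fun i _ => Finset.sum_le_sum fun j _ => ?_
            by_cases h : G.Adj i j
            · rw [if_pos h, abs_mul, abs_mul]
              have hε : |ε (i, j) ω| = 1 := by rcases hval (i, j) ω with h' | h' <;> simp [h']
              rw [hε, one_mul]
              calc |s' i| * |t' j| ≤ 1 * 1 :=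
                    mul_le_mul (habs1 s' hs' i) (habs1 t' ht' j) (abs_nonneg _) zero_le_one
                _ = 1 := one_mul 1
            · rw [if_neg h, abs_zero]; exact zero_le_one
        _ = M := by simp [hMdef, sq, Finset.card_univ]
    have hint : (∫ ω, |∑ i, ∑ j, if G.Adj i j then ε (i, j) ω * s' i * t' j else 0| ^ p) ≤ M ^ p := by
      by_cases hI : Integrable (fun ω => |∑ i, ∑ j, if G.Adj i j then ε (i, j) ω * s' i * t' j else 0| ^ p) ℙ
      · calc (∫ ω, |∑ i, ∑ j, if G.Adj i j then ε (i, j) ω * s' i * t' j else 0| ^ p)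
            ≤ ∫ _ω, M ^ p := integral_mono hI (integrable_const _)
              (fun ω => Real.rpow_le_rpow (abs_nonneg _) (hsum ω) hp0.le)
          _ = M ^ p := by simp
      · rw [integral_undef hI]
        exact Real.rpow_nonneg hM0 p
    calc (∫ ω, |∑ i, ∑ j, if G.Adj i j then ε (i, j) ω * s' i * t' j else 0| ^ p) ^ (1/p)
        ≤ (M ^ p) ^ (1/p) := Real.rpow_le_rpow
          (integral_nonneg fun ω => Real.rpow_nonneg (abs_nonneg _) p) hint (by positivity)
      _ = M := by
          rw [← Real.rpow_mul hM0, mul_one_div, div_self hp0.ne', Real.rpow_one]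
  have hsup : (∫ ω, f ω) ^ (1/p) ≤ graphRadNorm G ε p := le_csSup hbdd hmem
  refine le_trans ?_ hsup
  -- lower bound the element
  have h3 : (c ^ p * (2:ℝ)⁻¹ ^ k) ^ (1/p) ≤ (∫ ω, f ω) ^ (1/p) :=
    Real.rpow_le_rpow (by positivity) hint_lb (by positivity)
  refine le_trans ?_ h3
  have h2k : ((2:ℝ)⁻¹) ^ k = (2:ℝ) ^ (-(k:ℝ)) := by
    rw [Real.rpow_neg (by norm_num), Real.rpow_natCast, inv_pow]
  have h4 : (c ^ p * (2:ℝ)⁻¹ ^ k) ^ (1/p) = c * (2:ℝ) ^ (-(k:ℝ) * (1/p)) := by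
    rw [h2k, Real.mul_rpow (Real.rpow_nonneg hc0.le p) (Real.rpow_nonneg (by norm_num) _),
      ← Real.rpow_mul hc0.le, mul_one_div, div_self hp0.ne', Real.rpow_one,
      ← Real.rpow_mul (by norm_num : (0:ℝ) ≤ 2)]
  rw [h4]
  have h5 : (2:ℝ) ^ (-1 : ℝ) ≤ (2:ℝ) ^ (-(k:ℝ) * (1/p)) := by
    apply Real.rpow_le_rpow_left_iff (by norm_num : (1:ℝ) < 2) |>.mpr
    rw [neg_mul, neg_le_neg_iff, mul_one_div, div_le_one hp0]
    exact hkp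
  have h6 : c * (2:ℝ) ^ (-1:ℝ) ≤ c * (2:ℝ) ^ (-(k:ℝ) * (1/p)) :=
    mul_le_mul_of_nonneg_left h5 hc0.le
  refine le_trans ?_ h6
  rw [Real.rpow_neg_one]
  have h7 : Real.sqrt (p/8) ≤ Real.sqrt ((c * 2⁻¹) ^ 2) := by
    apply Real.sqrt_le_sqrt
    have : (c * 2⁻¹) ^ 2 = (k:ℝ) / 4 := by
      rw [mul_pow, sq, hcc]; ring
    rw [this]
    linarith
  rwa [Real.sqrt_sq_eq_abs, abs_of_nonneg (by positivity)] at h7
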